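/- For every element W_q of the canonical partition of I_NS(T) of an admissible tuple T = (G₁,G₁',G₂,G₂'), there is a right vertex j ∈ [n] having at least two neighbors in W_q in each of the simple graphs G₁ and G₂. -/

import Mathlib

open Finset

/-- A bipartite multigraph on `[n] ⊔ [m]` encoded by its adjacency (multiplicity) matrix. -/
def IsReg (n d : ℕ) (A : Fin n → Fin n → ℕ) : Prop :=
  (∀ i, ∑ j, A i j = d) ∧ (∀ j, ∑ i, A i j = d)

/-- A multigraph is simple if all multiplicities are at most one. -/
def IsSimpleG {n m : ℕ} (A : Fin n → Fin m → ℕ) : Prop := ∀ i j, A i j ≤ 1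

/-- The simple switching `⟨i,i',j,j'⟩`: replace the edges `(i,j)` and `(i',j')` by
`(i,j')` and `(i',j)`. -/
def switchM {n m : ℕ} (A : Fin n → Fin m → ℕ) (i i' : Fin n) (j j' : Fin m) :
    Fin n → Fin m → ℕ :=
  fun a b =>
    if a = i ∧ b = j then A a b - 1
    else if a = i' ∧ b = j' then A a b - 1
    else if a = i ∧ b = j' then A a b + 1
    else if a = i' ∧ b = j then A a b + 1
    else A a b

/-- Two multigraphs are adjacent if one is obtained from the other by a simple switching
operated on two non-incident edges. -/
def AdjacentM {n : ℕ} (A B : Fin n → Fin n → ℕ) : Prop :=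
  ∃ i i' j j', i ≠ i' ∧ j ≠ j' ∧ 0 < A i j ∧ 0 < A i' j' ∧ B = switchM A i i' j j'

/-- `Cat_{n,d}(k)`: `d`-regular bipartite multigraphs with exactly `k` multiplicity-2 edges,
no two of them incident, and no multiplicities `≥ 3`. -/
def InCat (n d k : ℕ) (A : Fin n → Fin n → ℕ) : Prop :=
  IsReg n d A ∧ (∀ i j, A i j ≤ 2) ∧
    (Finset.univ.filter fun p : Fin n × Fin n => A p.1 p.2 = 2).card = k ∧
    (∀ i j j', A i j = 2 → A i j' = 2 → j = j') ∧
    (∀ i i' j, A i j = 2 → A i' j = 2 → i = i')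

/-- The set of multiedges (multiplicity-2 edges) of a multigraph. -/
def MEs {n : ℕ} (A : Fin n → Fin n → ℕ) : Finset (Fin n × Fin n) :=
  Finset.univ.filter fun p => A p.1 p.2 = 2

/-- The data of a simple path starting at a multigraph `A ∈ Cat_{n,d}(k)`: to each
multiedge `e = (i_s, j_s)` of `A` it assigns the auxiliary edge `f e = (i'_s, j'_s)` used by
the corresponding simple switching `⟨i_s, i'_s, j_s, j'_s⟩`.  The auxiliary left (resp. right)
vertices are pairwise distinct, avoid all multiedge left (resp. right) vertices, and the
switching creates no multiple edges. -/
def SimplePathData {n : ℕ} (A : Fin n → Fin n → ℕ)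
    (f : Fin n × Fin n → Fin n × Fin n) : Prop :=
  (∀ e ∈ MEs A, 0 < A (f e).1 (f e).2 ∧ A (f e).1 e.2 = 0 ∧ A e.1 (f e).2 = 0 ∧
    ∀ e' ∈ MEs A, (f e).1 ≠ e'.1 ∧ (f e).2 ≠ e'.2) ∧
  ∀ e ∈ MEs A, ∀ e' ∈ MEs A, e ≠ e' → (f e).1 ≠ (f e').1 ∧ (f e).2 ≠ (f e').2

/-- The endpoint of the simple path with data `f` starting at `A`: each multiedge
`(i_s,j_s)` loses one parallel edge, the auxiliary edge `(i'_s,j'_s)` is removed, and the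
edges `(i_s,j'_s)` and `(i'_s,j_s)` are added. -/
def endpointM {n : ℕ} (A : Fin n → Fin n → ℕ) (f : Fin n × Fin n → Fin n × Fin n) :
    Fin n → Fin n → ℕ :=
  fun a b =>
    A a b + ((MEs A).filter fun e => (a = e.1 ∧ b = (f e).2) ∨ (a = (f e).1 ∧ b = e.2)).card
      - ((MEs A).filter fun e => (a = e.1 ∧ b = e.2) ∨ (a = (f e).1 ∧ b = (f e).2)).card

/-- The `s`-neighborhood of a multigraph: all endpoints of simple paths starting at it. -/
def SN {n : ℕ} (A : Fin n → Fin n → ℕ) : Set (Fin n → Fin n → ℕ) :=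
  {B | ∃ f, SimplePathData A f ∧ B = endpointM A f}

/-- The anti-expansion measure `Z(G)` of a simple graph. -/
def Zae {n : ℕ} (A : Fin n → Fin n → ℕ) : ℕ :=
  (Finset.univ.filter fun p : Fin n × Fin n =>
    0 < A p.1 p.2 ∧ ∃ k, k ≠ p.1 ∧ 0 < A k p.2 ∧
      2 ≤ (Finset.univ.filter fun j => 0 < A p.1 j ∧ 0 < A k j).card).card

/-- The set `I(G_h, G_h')` of left vertices used by the simple switchings of the simple
path with data `f` starting at `A`: the multiedge left vertices together with the auxiliary
left vertices. -/
def IsetS {n : ℕ} (A : Fin n → Fin n → ℕ) (f : Fin n × Fin n → Fin n × Fin n) :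
    Set (Fin n) :=
  {i | ∃ e ∈ MEs A, i = e.1 ∨ i = (f e).1}

/-- Validity of a switching datum `s = ((a,b),(a',b'))`, encoding the simple switching
`⟨a,a',b,b'⟩` on a multigraph `A`. -/
def SwOK {n : ℕ} (A : Fin n → Fin n → ℕ)
    (s : (Fin n × Fin n) × (Fin n × Fin n)) : Prop :=
  s.1.1 ≠ s.2.1 ∧ s.1.2 ≠ s.2.2 ∧ 0 < A s.1.1 s.1.2 ∧ 0 < A s.2.1 s.2.2

/-- Application of a switching datum. -/
def applySw {n : ℕ} (A : Fin n → Fin n → ℕ)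
    (s : (Fin n × Fin n) × (Fin n × Fin n)) : Fin n → Fin n → ℕ :=
  switchM A s.1.1 s.2.1 s.1.2 s.2.2

/-- `I(T) = I(G₁,G₁') ∪ I(G₂,G₂')`. -/
def ITot {n : ℕ} (G₁' G₂' : Fin n → Fin n → ℕ)
    (f₁ f₂ : Fin n × Fin n → Fin n × Fin n) : Set (Fin n) :=
  IsetS G₁' f₁ ∪ IsetS G₂' f₂

/-- An `m`-standard edge `e = (i,j)` with respect to the tuple `T = (G₁,G₁',G₂,G₂')`
with path data `f₁, f₂` and (optional) switching `sw` between `G₁'` and `G₂'`. -/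
def MStandard {n : ℕ} (G₁ G₁' G₂ G₂' : Fin n → Fin n → ℕ)
    (f₁ f₂ : Fin n × Fin n → Fin n × Fin n)
    (sw : Option ((Fin n × Fin n) × (Fin n × Fin n)))
    (e : Fin n × Fin n) : Prop :=
  G₁' e.1 e.2 = 2 ∧ G₂' e.1 e.2 = 2 ∧
  (f₁ e).1 ∉ IsetS G₂' f₂ ∧
  (f₂ e).1 ∉ IsetS G₁' f₁ ∧
  G₁ (f₁ e).1 (f₂ e).2 = 0 ∧ G₂ (f₁ e).1 (f₂ e).2 = 0 ∧
  ∀ s, sw = some s →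
    s.1.1 ∉ ({e.1, (f₁ e).1, (f₂ e).1} : Set (Fin n)) ∧
    s.2.1 ∉ ({e.1, (f₁ e).1, (f₂ e).1} : Set (Fin n))

/-- The set `I_ST(T)` of standard left vertices: left vertices of `m`-standard edges and
the associated auxiliary left vertices. -/
def ISTs {n : ℕ} (G₁ G₁' G₂ G₂' : Fin n → Fin n → ℕ)
    (f₁ f₂ : Fin n × Fin n → Fin n × Fin n)
    (sw : Option ((Fin n × Fin n) × (Fin n × Fin n))) : Set (Fin n) :=
  {i | ∃ e, MStandard G₁ G₁' G₂ G₂' f₁ f₂ sw e ∧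
    (i = e.1 ∨ i = (f₁ e).1 ∨ i = (f₂ e).1)}

/-- The switching between `G₁'` and `G₂'` is of type B: it operates on a left vertex of
`I(T)`. -/
def TypeB {n : ℕ} (G₁' G₂' : Fin n → Fin n → ℕ)
    (f₁ f₂ : Fin n × Fin n → Fin n × Fin n)
    (sw : Option ((Fin n × Fin n) × (Fin n × Fin n))) : Prop :=
  ∃ s, sw = some s ∧
    (s.1.1 ∈ ITot G₁' G₂' f₁ f₂ ∨ s.2.1 ∈ ITot G₁' G₂' f₁ f₂)

/-- The set `Ĩ`: the two left vertices of the switching between `G₁'` and `G₂'` if it is of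
type B, and `∅` otherwise. -/
def ItildeS {n : ℕ} (G₁' G₂' : Fin n → Fin n → ℕ)
    (f₁ f₂ : Fin n × Fin n → Fin n × Fin n)
    (sw : Option ((Fin n × Fin n) × (Fin n × Fin n))) : Set (Fin n) :=
  {i | ∃ s, sw = some s ∧
    (s.1.1 ∈ ITot G₁' G₂' f₁ f₂ ∨ s.2.1 ∈ ITot G₁' G₂' f₁ f₂) ∧
    (i = s.1.1 ∨ i = s.2.1)}

/-- The set `I_NS(T)` of non-standard left vertices:
`I_NS(T) = (I(T) \ I_ST(T)) ∪ Ĩ`. -/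
def INS {n : ℕ} (G₁ G₁' G₂ G₂' : Fin n → Fin n → ℕ)
    (f₁ f₂ : Fin n × Fin n → Fin n × Fin n)
    (sw : Option ((Fin n × Fin n) × (Fin n × Fin n))) : Set (Fin n) :=
  (ITot G₁' G₂' f₁ f₂ \ ISTs G₁ G₁' G₂ G₂' f₁ f₂ sw) ∪ ItildeS G₁' G₂' f₁ f₂ sw

/-- Two left vertices are paired if they are operated on together by one of the relevant
simple switchings (a switching of the simple path from `G₁'` to `G₁`, of the simple path
from `G₂'` to `G₂`, or the switching connecting `G₁'` and `G₂'`). -/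
def SwPairRel {n : ℕ} (G₁' G₂' : Fin n → Fin n → ℕ)
    (f₁ f₂ : Fin n × Fin n → Fin n × Fin n)
    (sw : Option ((Fin n × Fin n) × (Fin n × Fin n)))
    (i i' : Fin n) : Prop :=
  (∃ e ∈ MEs G₁', (i = e.1 ∧ i' = (f₁ e).1) ∨ (i' = e.1 ∧ i = (f₁ e).1)) ∨
  (∃ e ∈ MEs G₂', (i = e.1 ∧ i' = (f₂ e).1) ∨ (i' = e.1 ∧ i = (f₂ e).1)) ∨
  (∃ s, sw = some s ∧ ((i = s.1.1 ∧ i' = s.2.1) ∨ (i = s.2.1 ∧ i' = s.1.1)))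

/-- The pairing relation restricted to the non-standard set `I_NS(T)`. -/
def SwPairNS {n : ℕ} (G₁ G₁' G₂ G₂' : Fin n → Fin n → ℕ)
    (f₁ f₂ : Fin n × Fin n → Fin n × Fin n)
    (sw : Option ((Fin n × Fin n) × (Fin n × Fin n)))
    (i i' : Fin n) : Prop :=
  SwPairRel G₁' G₂' f₁ f₂ sw i i' ∧
    i ∈ INS G₁ G₁' G₂ G₂' f₁ f₂ sw ∧ i' ∈ INS G₁ G₁' G₂ G₂' f₁ f₂ sw

/-- The element of the canonical partition of `I_NS(T)` containing the left vertex `i₀`: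
the connected component of `i₀` under the pairing relation. -/
def BlockOf {n : ℕ} (G₁ G₁' G₂ G₂' : Fin n → Fin n → ℕ)
    (f₁ f₂ : Fin n × Fin n → Fin n × Fin n)
    (sw : Option ((Fin n × Fin n) × (Fin n × Fin n)))
    (i₀ : Fin n) : Set (Fin n) :=
  {x | Relation.EqvGen (SwPairNS G₁ G₁' G₂ G₂' f₁ f₂ sw) i₀ x}

/-- The set `Y` of left vertices employed by the switching connecting `G₁'` and `G₂'`. -/
def Ysw {n : ℕ} (sw : Option ((Fin n × Fin n) × (Fin n × Fin n))) : Set (Fin n) :=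
  {i | ∃ s, sw = some s ∧ (i = s.1.1 ∨ i = s.2.1)}

/-- The number of multiedges of `A` incident to the set `W` of left vertices. -/
noncomputable def MCount {n : ℕ} (A : Fin n → Fin n → ℕ) (W : Set (Fin n)) : ℕ :=
  ({e : Fin n × Fin n | A e.1 e.2 = 2 ∧ e.1 ∈ W} : Set (Fin n × Fin n)).ncard
namespace Stmt16Aux

open Finset

variable {n : ℕ}

lemma mem_MEs {A : Fin n → Fin n → ℕ} {e : Fin n × Fin n} :
    e ∈ MEs A ↔ A e.1 e.2 = 2 := by
  simp [MEs]

/-- column sum of `A` over `W`. -/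
noncomputable def colsum (A : Fin n → Fin n → ℕ) (W : Set (Fin n)) (j : Fin n) : ℕ :=
  ∑ a ∈ (Set.toFinite W).toFinset, A a j

lemma two_le_colsum {A : Fin n → Fin n → ℕ} {W : Set (Fin n)} {x : Fin n} {j : Fin n}
    (hx : x ∈ W) (h : A x j = 2) : 2 ≤ colsum A W j := by
  have hx' : x ∈ (Set.toFinite W).toFinset := (Set.Finite.mem_toFinset _).2 hx
  calc 2 = A x j := h.symm
    _ ≤ _ := Finset.single_le_sum (f := fun a => A a j) (fun _ _ => Nat.zero_le _) hx'

lemma ncard_final {A : Fin n → Fin n → ℕ} {W : Set (Fin n)} {j : Fin n}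
    (hsimple : ∀ i, A i j ≤ 1) (h2 : 2 ≤ colsum A W j) :
    2 ≤ ({i | i ∈ W ∧ 0 < A i j} : Set (Fin n)).ncard := by
  classical
  set S := (Set.toFinite W).toFinset.filter (fun i => 0 < A i j) with hS
  have hset : ({i | i ∈ W ∧ 0 < A i j} : Set (Fin n)) = ↑S := by
    ext a
    simp [hS, Set.Finite.mem_toFinset, Set.mem_setOf_eq]
  rw [hset, Set.ncard_coe_finset]
  have h1 : colsum A W j = ∑ a ∈ S, A a j := by
    rw [hS]
    exact (Finset.sum_filter_of_ne (fun x _ hx => Nat.pos_of_ne_zero hx)).symm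
  have h3 : ∑ a ∈ S, A a j ≤ ∑ a ∈ S, 1 :=
    Finset.sum_le_sum (fun i _ => hsimple i)
  simp only [Finset.sum_const, smul_eq_mul, mul_one] at h3
  omega

lemma colsum_switch (A : Fin n → Fin n → ℕ) (W : Set (Fin n)) {i i' j j' : Fin n} (b : Fin n)
    (hii : i ≠ i') (hjj : j ≠ j') (h1 : 0 < A i j) (h2 : 0 < A i' j')
    (hcl : i ∈ W ↔ i' ∈ W) :
    colsum (switchM A i i' j j') W b = colsum A W b := by
  classical
  unfold colsum
  set s := (Set.toFinite W).toFinset with hs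
  have hmem : ∀ a, a ∈ s ↔ a ∈ W := fun a => Set.Finite.mem_toFinset _
  by_cases hiW : i ∈ W
  · have hi'W : i' ∈ W := hcl.1 hiW
    have hi : i ∈ s := (hmem i).2 hiW
    have hi' : i' ∈ s.erase i := Finset.mem_erase.2 ⟨fun h => hii h.symm, (hmem i').2 hi'W⟩
    rw [← Finset.add_sum_erase s _ hi, ← Finset.add_sum_erase _ _ hi',
        ← Finset.add_sum_erase s (fun a => A a b) hi, ← Finset.add_sum_erase _ (fun a => A a b) hi']
    have htail : ∑ a ∈ (s.erase i).erase i', switchM A i i' j j' a b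
        = ∑ a ∈ (s.erase i).erase i', A a b := by
      refine Finset.sum_congr rfl (fun a ha => ?_)
      have ha' := Finset.mem_erase.1 ha
      have ha2 := Finset.mem_erase.1 ha'.2
      simp [switchM, ha'.1, ha2.1]
    rw [htail]
    have hhead : switchM A i i' j j' i b + switchM A i i' j j' i' b = A i b + A i' b := by
      simp only [switchM]
      by_cases hbj : b = j <;> by_cases hbj' : b = j' <;>
        simp_all [hii, hii.symm, hjj, hjj.symm] <;> omega
    omega
  · have hi'W : i' ∉ W := fun h => hiW (hcl.2 h)
    refine Finset.sum_congr rfl (fun a ha => ?_)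
    have haW := (hmem a).1 ha
    have h1 : a ≠ i := fun h => hiW (h ▸ haW)
    have h2 : a ≠ i' := fun h => hi'W (h ▸ haW)
    simp [switchM, h1, h2]

end Stmt16Aux

namespace Stmt16Aux

open Finset

variable {n d k : ℕ} {A : Fin n → Fin n → ℕ} {f : Fin n × Fin n → Fin n × Fin n}

lemma me_left_inj (hC : InCat n d k A) {e e' : Fin n × Fin n}
    (he : e ∈ MEs A) (he' : e' ∈ MEs A) (h : e.1 = e'.1) : e = e' := by
  have h2 : A e.1 e'.2 = 2 := by rw [h]; exact mem_MEs.1 he'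
  exact Prod.ext h (hC.2.2.2.1 e.1 e.2 e'.2 (mem_MEs.1 he) h2)

lemma aux_ne_left (hP : SimplePathData A f) {e e' : Fin n × Fin n}
    (he : e ∈ MEs A) (he' : e' ∈ MEs A) : (f e).1 ≠ e'.1 :=
  ((hP.1 e he).2.2.2 e' he').1

lemma aux_left_inj (hP : SimplePathData A f) {e e' : Fin n × Fin n}
    (he : e ∈ MEs A) (he' : e' ∈ MEs A) (h : (f e).1 = (f e').1) : e = e' := by
  by_contra hne
  exact (hP.2 e he e' he' hne).1 h

lemma card_pin_le_one (hC : InCat n d k A) (hP : SimplePathData A f) (a : Fin n)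
    (P Q : (Fin n × Fin n) → Prop) [DecidablePred P] [DecidablePred Q] :
    ((MEs A).filter fun e => (a = e.1 ∧ P e) ∨ (a = (f e).1 ∧ Q e)).card ≤ 1 := by
  refine Finset.card_le_one.2 (fun e he e' he' => ?_)
  rw [Finset.mem_filter] at he he'
  obtain ⟨heM, hc⟩ := he
  obtain ⟨heM', hc'⟩ := he'
  rcases hc with ⟨h1, -⟩ | ⟨h1, -⟩ <;> rcases hc' with ⟨h2, -⟩ | ⟨h2, -⟩
  · exact me_left_inj hC heM heM' (h1.symm.trans h2)
  · exact absurd (h2.symm.trans h1) (aux_ne_left hP heM' heM)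
  · exact absurd (h1.symm.trans h2) (aux_ne_left hP heM heM')
  · exact aux_left_inj hP heM heM' (h1.symm.trans h2)

lemma endpoint_simple (hC : InCat n d k A) (hP : SimplePathData A f) (a b : Fin n) :
    endpointM A f a b ≤ 1 := by
  classical
  unfold endpointM
  set sc := ((MEs A).filter fun e => (a = e.1 ∧ b = (f e).2) ∨ (a = (f e).1 ∧ b = e.2)).card
    with hsc
  set rc := ((MEs A).filter fun e => (a = e.1 ∧ b = e.2) ∨ (a = (f e).1 ∧ b = (f e).2)).card
    with hrc
  have hs_le : sc ≤ 1 := card_pin_le_one hC hP a _ _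
  have hs_pos : 1 ≤ sc → A a b = 0 := by
    intro h
    obtain ⟨e, he⟩ := Finset.card_pos.1 h
    rw [Finset.mem_filter] at he
    rcases he.2 with ⟨h1, h2⟩ | ⟨h1, h2⟩
    · rw [h1, h2]; exact (hP.1 e he.1).2.2.1
    · rw [h1, h2]; exact (hP.1 e he.1).2.1
  have hA2r : A a b = 2 → 1 ≤ rc := by
    intro h
    have hm : (a, b) ∈ (MEs A).filter
        fun e => (a = e.1 ∧ b = e.2) ∨ (a = (f e).1 ∧ b = (f e).2) :=
      Finset.mem_filter.2 ⟨mem_MEs.2 h, Or.inl ⟨rfl, rfl⟩⟩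
    exact Finset.card_pos.2 ⟨_, hm⟩
  have hA_le : A a b ≤ 2 := hC.2.1 a b
  omega

end Stmt16Aux

namespace Stmt16Aux

open Finset

variable {n d k : ℕ} {A : Fin n → Fin n → ℕ} {f : Fin n × Fin n → Fin n × Fin n}

lemma sum_ite_pair (s : Finset (Fin n)) {x y : Fin n} (hxy : x ≠ y) (P Q : Prop)
    [Decidable P] [Decidable Q] :
    (∑ a ∈ s, if (a = x ∧ P) ∨ (a = y ∧ Q) then (1 : ℕ) else 0)
      = (if x ∈ s ∧ P then 1 else 0) + (if y ∈ s ∧ Q then 1 else 0) := by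
  have hpt : ∀ a, (if (a = x ∧ P) ∨ (a = y ∧ Q) then (1 : ℕ) else 0)
      = (if a = x ∧ P then 1 else 0) + (if a = y ∧ Q then 1 else 0) := by
    intro a
    by_cases h1 : a = x ∧ P <;> by_cases h2 : a = y ∧ Q
    · exact absurd (h1.1.symm.trans h2.1) hxy
    · simp [h1, h2]
      exact fun h => absurd h hxy
    · simp [h1, h2]
      exact fun h => absurd h.symm hxy
    · simp [h1, h2]
  rw [Finset.sum_congr rfl fun a _ => hpt a, Finset.sum_add_distrib]
  congr 1
  · by_cases hP : P <;> simp [hP]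
  · by_cases hQ : Q <;> simp [hQ]

lemma colsum_endpoint (hC : InCat n d k A) (hP : SimplePathData A f) (W : Set (Fin n))
    (hcl : ∀ e ∈ MEs A, (e.1 ∈ W ↔ (f e).1 ∈ W)) (j : Fin n) :
    colsum (endpointM A f) W j = colsum A W j := by
  unfold colsum
  set s := (Set.toFinite W).toFinset with hs
  have hmem : ∀ a, a ∈ s ↔ a ∈ W := fun a => Set.Finite.mem_toFinset _
  have hpoint : ∀ a, endpointM A f a j
      + ((MEs A).filter fun e => (a = e.1 ∧ j = e.2) ∨ (a = (f e).1 ∧ j = (f e).2)).card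
      = A a j
      + ((MEs A).filter fun e => (a = e.1 ∧ j = (f e).2) ∨ (a = (f e).1 ∧ j = e.2)).card := by
    intro a
    have h1 : ((MEs A).filter fun e =>
        (a = e.1 ∧ j = e.2) ∨ (a = (f e).1 ∧ j = (f e).2)).card ≤ 1 :=
      card_pin_le_one hC hP a _ _
    have h2 : 1 ≤ ((MEs A).filter fun e =>
        (a = e.1 ∧ j = e.2) ∨ (a = (f e).1 ∧ j = (f e).2)).card → 1 ≤ A a j := by
      intro h
      obtain ⟨e, he⟩ := Finset.card_pos.1 h
      rw [Finset.mem_filter] at he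
      rcases he.2 with ⟨ha, hb⟩ | ⟨ha, hb⟩
      · rw [ha, hb]
        have := mem_MEs.1 he.1
        omega
      · rw [ha, hb]
        exact (hP.1 e he.1).1
    unfold endpointM
    omega
  have hsum : (∑ a ∈ s, endpointM A f a j)
      + ∑ a ∈ s, ((MEs A).filter fun e =>
          (a = e.1 ∧ j = e.2) ∨ (a = (f e).1 ∧ j = (f e).2)).card
      = (∑ a ∈ s, A a j)
      + ∑ a ∈ s, ((MEs A).filter fun e =>
          (a = e.1 ∧ j = (f e).2) ∨ (a = (f e).1 ∧ j = e.2)).card := by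
    rw [← Finset.sum_add_distrib, ← Finset.sum_add_distrib]
    exact Finset.sum_congr rfl fun a _ => hpoint a
  have heq : (∑ a ∈ s, ((MEs A).filter fun e =>
          (a = e.1 ∧ j = e.2) ∨ (a = (f e).1 ∧ j = (f e).2)).card)
      = ∑ a ∈ s, ((MEs A).filter fun e =>
          (a = e.1 ∧ j = (f e).2) ∨ (a = (f e).1 ∧ j = e.2)).card := by
    simp_rw [Finset.card_filter]
    rw [Finset.sum_comm, Finset.sum_comm (s := s)]
    refine Finset.sum_congr rfl fun e he => ?_
    have hxy : e.1 ≠ (f e).1 := fun h => aux_ne_left hP he he h.symm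
    rw [sum_ite_pair s hxy, sum_ite_pair s hxy]
    have hWiff : e.1 ∈ s ↔ (f e).1 ∈ s := by rw [hmem, hmem]; exact hcl e he
    by_cases h1 : e.1 ∈ s
    · have h2 : (f e).1 ∈ s := hWiff.1 h1
      simp only [h1, h2, true_and]
      by_cases hj1 : j = e.2 <;> by_cases hj2 : j = (f e).2 <;> simp [hj1, hj2, Nat.add_comm]
    · have h2 : (f e).1 ∉ s := fun h => h1 (hWiff.2 h)
      simp [h1, h2]
  omega

end Stmt16Aux

namespace Stmt16Aux

open Finset

variable {n d k₁ k₂ : ℕ} {G₁ G₁' G₂ G₂' : Fin n → Fin n → ℕ}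
  {f₁ f₂ : Fin n × Fin n → Fin n × Fin n}
  {sw : Option ((Fin n × Fin n) × (Fin n × Fin n))} {i₀ : Fin n}

lemma ns_of_not_std₁ (hc₁ : InCat n d k₁ G₁') (hp₁ : SimplePathData G₁' f₁)
    {e : Fin n × Fin n} (he : e ∈ MEs G₁')
    (hns : ¬ MStandard G₁ G₁' G₂ G₂' f₁ f₂ sw e) :
    e.1 ∈ INS G₁ G₁' G₂ G₂' f₁ f₂ sw ∧ (f₁ e).1 ∈ INS G₁ G₁' G₂ G₂' f₁ f₂ sw := by
  constructor
  · refine Or.inl ⟨Or.inl ⟨e, he, Or.inl rfl⟩, ?_⟩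
    rintro ⟨e', hstd, hcase⟩
    have he' : e' ∈ MEs G₁' := mem_MEs.2 hstd.1
    rcases hcase with h | h | h
    · exact hns (by rw [me_left_inj hc₁ he he' h]; exact hstd)
    · exact aux_ne_left hp₁ he' he h.symm
    · exact hstd.2.2.2.1 ⟨e, he, Or.inl h.symm⟩
  · refine Or.inl ⟨Or.inl ⟨e, he, Or.inr rfl⟩, ?_⟩
    rintro ⟨e', hstd, hcase⟩
    have he' : e' ∈ MEs G₁' := mem_MEs.2 hstd.1
    rcases hcase with h | h | h
    · exact aux_ne_left hp₁ he he' h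
    · exact hns (by rw [aux_left_inj hp₁ he he' h]; exact hstd)
    · exact hstd.2.2.2.1 ⟨e, he, Or.inr h.symm⟩

lemma ns_of_not_std₂ (hc₂ : InCat n d k₂ G₂') (hp₂ : SimplePathData G₂' f₂)
    {e : Fin n × Fin n} (he : e ∈ MEs G₂')
    (hns : ¬ MStandard G₁ G₁' G₂ G₂' f₁ f₂ sw e) :
    e.1 ∈ INS G₁ G₁' G₂ G₂' f₁ f₂ sw ∧ (f₂ e).1 ∈ INS G₁ G₁' G₂ G₂' f₁ f₂ sw := by
  constructor
  · refine Or.inl ⟨Or.inr ⟨e, he, Or.inl rfl⟩, ?_⟩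
    rintro ⟨e', hstd, hcase⟩
    have he' : e' ∈ MEs G₂' := mem_MEs.2 hstd.2.1
    rcases hcase with h | h | h
    · exact hns (by rw [me_left_inj hc₂ he he' h]; exact hstd)
    · exact hstd.2.2.1 ⟨e, he, Or.inl h.symm⟩
    · exact aux_ne_left hp₂ he' he h.symm
  · refine Or.inl ⟨Or.inr ⟨e, he, Or.inr rfl⟩, ?_⟩
    rintro ⟨e', hstd, hcase⟩
    have he' : e' ∈ MEs G₂' := mem_MEs.2 hstd.2.1
    rcases hcase with h | h | h
    · exact aux_ne_left hp₂ he he' h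
    · exact hstd.2.2.1 ⟨e, he, Or.inr h.symm⟩
    · exact hns (by rw [aux_left_inj hp₂ he he' h]; exact hstd)

lemma std_not_INS {e : Fin n × Fin n} (hstd : MStandard G₁ G₁' G₂ G₂' f₁ f₂ sw e) :
    ∀ x, (x = e.1 ∨ x = (f₁ e).1 ∨ x = (f₂ e).1) →
      x ∉ INS G₁ G₁' G₂ G₂' f₁ f₂ sw := by
  intro x hx1
  rintro (⟨-, hnST⟩ | ⟨s, hs, -, hx⟩)
  · exact hnST ⟨e, hstd, hx1⟩
  · have hss := hstd.2.2.2.2.2.2 s hs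
    rcases hx with hx | hx <;> subst hx
    · exact hss.1 (by simpa using hx1)
    · exact hss.2 (by simpa using hx1)

lemma block_sub_INS (hi₀ : i₀ ∈ INS G₁ G₁' G₂ G₂' f₁ f₂ sw) {x : Fin n}
    (hx : x ∈ BlockOf G₁ G₁' G₂ G₂' f₁ f₂ sw i₀) :
    x ∈ INS G₁ G₁' G₂ G₂' f₁ f₂ sw := by
  have H : ∀ a b, Relation.EqvGen (SwPairNS G₁ G₁' G₂ G₂' f₁ f₂ sw) a b →
      a = b ∨ (a ∈ INS G₁ G₁' G₂ G₂' f₁ f₂ sw ∧ b ∈ INS G₁ G₁' G₂ G₂' f₁ f₂ sw) := by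
    intro a b h
    induction h with
    | rel _ _ h => exact Or.inr ⟨h.2.1, h.2.2⟩
    | refl _ => exact Or.inl rfl
    | symm _ _ _ ih => tauto
    | trans _ _ _ _ _ ih1 ih2 =>
        rcases ih1 with rfl | h1 <;> rcases ih2 with rfl | h2 <;> tauto
  rcases H _ _ hx with rfl | h
  · exact hi₀
  · exact h.2

lemma mem_block_step {i i' : Fin n} (h : SwPairNS G₁ G₁' G₂ G₂' f₁ f₂ sw i i')
    (hi : i ∈ BlockOf G₁ G₁' G₂ G₂' f₁ f₂ sw i₀) :
    i' ∈ BlockOf G₁ G₁' G₂ G₂' f₁ f₂ sw i₀ :=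
  Relation.EqvGen.trans _ _ _ hi (Relation.EqvGen.rel _ _ h)

lemma closure₁ (hc₁ : InCat n d k₁ G₁') (hp₁ : SimplePathData G₁' f₁)
    (hi₀ : i₀ ∈ INS G₁ G₁' G₂ G₂' f₁ f₂ sw) :
    ∀ e ∈ MEs G₁', (e.1 ∈ BlockOf G₁ G₁' G₂ G₂' f₁ f₂ sw i₀ ↔
      (f₁ e).1 ∈ BlockOf G₁ G₁' G₂ G₂' f₁ f₂ sw i₀) := by
  intro e he
  by_cases hstd : MStandard G₁ G₁' G₂ G₂' f₁ f₂ sw e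
  · constructor <;> intro h
    · exact absurd (block_sub_INS hi₀ h) (std_not_INS hstd _ (Or.inl rfl))
    · exact absurd (block_sub_INS hi₀ h) (std_not_INS hstd _ (Or.inr (Or.inl rfl)))
  · obtain ⟨h1, h2⟩ := ns_of_not_std₁ hc₁ hp₁ he hstd
    have hrel : SwPairNS G₁ G₁' G₂ G₂' f₁ f₂ sw e.1 (f₁ e).1 :=
      ⟨Or.inl ⟨e, he, Or.inl ⟨rfl, rfl⟩⟩, h1, h2⟩
    have hrel' : SwPairNS G₁ G₁' G₂ G₂' f₁ f₂ sw (f₁ e).1 e.1 :=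
      ⟨Or.inl ⟨e, he, Or.inr ⟨rfl, rfl⟩⟩, h2, h1⟩
    exact ⟨mem_block_step hrel, mem_block_step hrel'⟩

lemma closure₂ (hc₂ : InCat n d k₂ G₂') (hp₂ : SimplePathData G₂' f₂)
    (hi₀ : i₀ ∈ INS G₁ G₁' G₂ G₂' f₁ f₂ sw) :
    ∀ e ∈ MEs G₂', (e.1 ∈ BlockOf G₁ G₁' G₂ G₂' f₁ f₂ sw i₀ ↔
      (f₂ e).1 ∈ BlockOf G₁ G₁' G₂ G₂' f₁ f₂ sw i₀) := by
  intro e he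
  by_cases hstd : MStandard G₁ G₁' G₂ G₂' f₁ f₂ sw e
  · constructor <;> intro h
    · exact absurd (block_sub_INS hi₀ h) (std_not_INS hstd _ (Or.inl rfl))
    · exact absurd (block_sub_INS hi₀ h) (std_not_INS hstd _ (Or.inr (Or.inr rfl)))
  · obtain ⟨h1, h2⟩ := ns_of_not_std₂ hc₂ hp₂ he hstd
    have hrel : SwPairNS G₁ G₁' G₂ G₂' f₁ f₂ sw e.1 (f₂ e).1 :=
      ⟨Or.inr (Or.inl ⟨e, he, Or.inl ⟨rfl, rfl⟩⟩), h1, h2⟩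
    have hrel' : SwPairNS G₁ G₁' G₂ G₂' f₁ f₂ sw (f₂ e).1 e.1 :=
      ⟨Or.inr (Or.inl ⟨e, he, Or.inr ⟨rfl, rfl⟩⟩), h2, h1⟩
    exact ⟨mem_block_step hrel, mem_block_step hrel'⟩

lemma closure_sw {s : (Fin n × Fin n) × (Fin n × Fin n)} (hs : sw = some s)
    (hi₀ : i₀ ∈ INS G₁ G₁' G₂ G₂' f₁ f₂ sw) :
    (s.1.1 ∈ BlockOf G₁ G₁' G₂ G₂' f₁ f₂ sw i₀ ↔
      s.2.1 ∈ BlockOf G₁ G₁' G₂ G₂' f₁ f₂ sw i₀) := by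
  by_cases hB : s.1.1 ∈ ITot G₁' G₂' f₁ f₂ ∨ s.2.1 ∈ ITot G₁' G₂' f₁ f₂
  · have h1 : s.1.1 ∈ INS G₁ G₁' G₂ G₂' f₁ f₂ sw := Or.inr ⟨s, hs, hB, Or.inl rfl⟩
    have h2 : s.2.1 ∈ INS G₁ G₁' G₂ G₂' f₁ f₂ sw := Or.inr ⟨s, hs, hB, Or.inr rfl⟩
    have hrel : SwPairNS G₁ G₁' G₂ G₂' f₁ f₂ sw s.1.1 s.2.1 :=
      ⟨Or.inr (Or.inr ⟨s, hs, Or.inl ⟨rfl, rfl⟩⟩), h1, h2⟩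
    have hrel' : SwPairNS G₁ G₁' G₂ G₂' f₁ f₂ sw s.2.1 s.1.1 :=
      ⟨Or.inr (Or.inr ⟨s, hs, Or.inr ⟨rfl, rfl⟩⟩), h2, h1⟩
    exact ⟨mem_block_step hrel, mem_block_step hrel'⟩
  · push_neg at hB
    have hnot : ∀ x, (x = s.1.1 ∨ x = s.2.1) → x ∉ INS G₁ G₁' G₂ G₂' f₁ f₂ sw := by
      rintro x hx (⟨hIT, -⟩ | ⟨s', hs', hB', -⟩)
      · rcases hx with rfl | rfl
        · exact hB.1 hIT
        · exact hB.2 hIT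
      · rw [hs] at hs'
        have : s = s' := Option.some_injective _ hs'
        subst this
        rcases hB' with h | h
        · exact hB.1 h
        · exact hB.2 h
    constructor <;> intro h
    · exact absurd (block_sub_INS hi₀ h) (hnot _ (Or.inl rfl))
    · exact absurd (block_sub_INS hi₀ h) (hnot _ (Or.inr rfl))

lemma exists_me_of_ITot (hc₁ : InCat n d k₁ G₁') (hc₂ : InCat n d k₂ G₂')
    (hp₁ : SimplePathData G₁' f₁) (hp₂ : SimplePathData G₂' f₂)
    {v : Fin n} (hvW : v ∈ BlockOf G₁ G₁' G₂ G₂' f₁ f₂ sw i₀)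
    (hv : v ∈ ITot G₁' G₂' f₁ f₂)
    (hvstd : ∀ e, MStandard G₁ G₁' G₂ G₂' f₁ f₂ sw e →
        v ≠ e.1 ∧ v ≠ (f₁ e).1 ∧ v ≠ (f₂ e).1) :
    ∃ e : Fin n × Fin n, e.1 ∈ BlockOf G₁ G₁' G₂ G₂' f₁ f₂ sw i₀ ∧
      (G₁' e.1 e.2 = 2 ∨ G₂' e.1 e.2 = 2) := by
  rcases hv with ⟨e, he, hc⟩ | ⟨e, he, hc⟩
  · have hstd : ¬ MStandard G₁ G₁' G₂ G₂' f₁ f₂ sw e := by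
      intro h
      rcases hc with h1 | h1
      · exact (hvstd e h).1 h1
      · exact (hvstd e h).2.1 h1
    obtain ⟨h1, h2⟩ := ns_of_not_std₁ hc₁ hp₁ he hstd
    have hrel' : SwPairNS G₁ G₁' G₂ G₂' f₁ f₂ sw (f₁ e).1 e.1 :=
      ⟨Or.inl ⟨e, he, Or.inr ⟨rfl, rfl⟩⟩, h2, h1⟩
    refine ⟨e, ?_, Or.inl (mem_MEs.1 he)⟩
    rcases hc with h1 | h1
    · exact h1 ▸ hvW
    · exact mem_block_step hrel' (h1 ▸ hvW)
  · have hstd : ¬ MStandard G₁ G₁' G₂ G₂' f₁ f₂ sw e := by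
      intro h
      rcases hc with h1 | h1
      · exact (hvstd e h).1 h1
      · exact (hvstd e h).2.2 h1
    obtain ⟨h1, h2⟩ := ns_of_not_std₂ hc₂ hp₂ he hstd
    have hrel' : SwPairNS G₁ G₁' G₂ G₂' f₁ f₂ sw (f₂ e).1 e.1 :=
      ⟨Or.inr (Or.inl ⟨e, he, Or.inr ⟨rfl, rfl⟩⟩), h2, h1⟩
    refine ⟨e, ?_, Or.inr (mem_MEs.1 he)⟩
    rcases hc with h1 | h1
    · exact h1 ▸ hvW
    · exact mem_block_step hrel' (h1 ▸ hvW)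

lemma start_me (hc₁ : InCat n d k₁ G₁') (hc₂ : InCat n d k₂ G₂')
    (hp₁ : SimplePathData G₁' f₁) (hp₂ : SimplePathData G₂' f₂)
    (hi₀ : i₀ ∈ INS G₁ G₁' G₂ G₂' f₁ f₂ sw) :
    ∃ e : Fin n × Fin n, e.1 ∈ BlockOf G₁ G₁' G₂ G₂' f₁ f₂ sw i₀ ∧
      (G₁' e.1 e.2 = 2 ∨ G₂' e.1 e.2 = 2) := by
  have hi₀W : i₀ ∈ BlockOf G₁ G₁' G₂ G₂' f₁ f₂ sw i₀ := Relation.EqvGen.refl i₀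
  rcases hi₀ with ⟨hIT, hnST⟩ | ⟨s, hs, hB, hx⟩
  · refine exists_me_of_ITot hc₁ hc₂ hp₁ hp₂ hi₀W hIT ?_
    intro e hstd
    exact ⟨fun h => hnST ⟨e, hstd, Or.inl h⟩,
      fun h => hnST ⟨e, hstd, Or.inr (Or.inl h)⟩,
      fun h => hnST ⟨e, hstd, Or.inr (Or.inr h)⟩⟩
  · have h1 : s.1.1 ∈ INS G₁ G₁' G₂ G₂' f₁ f₂ sw := Or.inr ⟨s, hs, hB, Or.inl rfl⟩
    have h2 : s.2.1 ∈ INS G₁ G₁' G₂ G₂' f₁ f₂ sw := Or.inr ⟨s, hs, hB, Or.inr rfl⟩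
    have hrel : SwPairNS G₁ G₁' G₂ G₂' f₁ f₂ sw s.1.1 s.2.1 :=
      ⟨Or.inr (Or.inr ⟨s, hs, Or.inl ⟨rfl, rfl⟩⟩), h1, h2⟩
    have hrel' : SwPairNS G₁ G₁' G₂ G₂' f₁ f₂ sw s.2.1 s.1.1 :=
      ⟨Or.inr (Or.inr ⟨s, hs, Or.inr ⟨rfl, rfl⟩⟩), h2, h1⟩
    have hW1 : s.1.1 ∈ BlockOf G₁ G₁' G₂ G₂' f₁ f₂ sw i₀ ∧
        s.2.1 ∈ BlockOf G₁ G₁' G₂ G₂' f₁ f₂ sw i₀ := by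
      rcases hx with rfl | rfl
      · exact ⟨hi₀W, mem_block_step hrel hi₀W⟩
      · exact ⟨mem_block_step hrel' hi₀W, hi₀W⟩
    have hvstd : ∀ e, MStandard G₁ G₁' G₂ G₂' f₁ f₂ sw e → ∀ x, (x = s.1.1 ∨ x = s.2.1) →
        x ≠ e.1 ∧ x ≠ (f₁ e).1 ∧ x ≠ (f₂ e).1 := by
      intro e hstd x hx'
      have hss := hstd.2.2.2.2.2.2 s hs
      rcases hx' with rfl | rfl
      · exact ⟨fun h => hss.1 (by simp [h]), fun h => hss.1 (by simp [h]),
          fun h => hss.1 (by simp [h])⟩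
      · exact ⟨fun h => hss.2 (by simp [h]), fun h => hss.2 (by simp [h]),
          fun h => hss.2 (by simp [h])⟩
    rcases hB with hv | hv
    · exact exists_me_of_ITot hc₁ hc₂ hp₁ hp₂ hW1.1 hv
        (fun e hstd => hvstd e hstd _ (Or.inl rfl))
    · exact exists_me_of_ITot hc₁ hc₂ hp₁ hp₂ hW1.2 hv
        (fun e hstd => hvstd e hstd _ (Or.inr rfl))

end Stmt16Aux

/-- For every element `W` of the canonical partition of `I_NS(T)` of an
admissible tuple `T = (G₁,G₁',G₂,G₂')`, there is a right vertex `j` having at least two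
neighbors in `W` in each of the simple graphs `G₁` and `G₂`. -/
theorem stmt16 (n d k₁ k₂ : ℕ)
    (G₁ G₁' G₂ G₂' : Fin n → Fin n → ℕ)
    (f₁ f₂ : Fin n × Fin n → Fin n × Fin n)
    (sw : Option ((Fin n × Fin n) × (Fin n × Fin n)))
    (hc₁ : InCat n d k₁ G₁') (hc₂ : InCat n d k₂ G₂')
    (hp₁ : SimplePathData G₁' f₁) (he₁ : endpointM G₁' f₁ = G₁)
    (hp₂ : SimplePathData G₂' f₂) (he₂ : endpointM G₂' f₂ = G₂)
    (hsw : match sw with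
      | none => G₁' = G₂'
      | some s => SwOK G₁' s ∧ G₂' = applySw G₁' s)
    (i₀ : Fin n) (hi₀ : i₀ ∈ INS G₁ G₁' G₂ G₂' f₁ f₂ sw)
    (W : Set (Fin n)) (hW : W = BlockOf G₁ G₁' G₂ G₂' f₁ f₂ sw i₀) :
    ∃ j : Fin n,
      2 ≤ ({i | i ∈ W ∧ 0 < G₁ i j} : Set (Fin n)).ncard ∧
      2 ≤ ({i | i ∈ W ∧ 0 < G₂ i j} : Set (Fin n)).ncard := by
  classical
  subst hW
  obtain ⟨e, heW, hcase⟩ := Stmt16Aux.start_me hc₁ hc₂ hp₁ hp₂ hi₀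
  have hcl₁ := Stmt16Aux.closure₁ hc₁ hp₁ hi₀
  have hcl₂ := Stmt16Aux.closure₂ hc₂ hp₂ hi₀
  set B := BlockOf G₁ G₁' G₂ G₂' f₁ f₂ sw i₀ with hB
  clear_value B
  have hcol₁ : Stmt16Aux.colsum G₁ B e.2 = Stmt16Aux.colsum G₁' B e.2 := by
    have h := Stmt16Aux.colsum_endpoint hc₁ hp₁ B hcl₁ e.2
    rwa [he₁] at h
  have hcol₂ : Stmt16Aux.colsum G₂ B e.2 = Stmt16Aux.colsum G₂' B e.2 := by
    have h := Stmt16Aux.colsum_endpoint hc₂ hp₂ B hcl₂ e.2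
    rwa [he₂] at h
  have hcol₁₂ : Stmt16Aux.colsum G₁' B e.2 = Stmt16Aux.colsum G₂' B e.2 := by
    cases sw with
    | none =>
        have h : G₁' = G₂' := hsw
        rw [h]
    | some s =>
        obtain ⟨hok, hG2⟩ := hsw
        rw [hG2]
        refine (Stmt16Aux.colsum_switch G₁' B e.2 hok.1 hok.2.1 hok.2.2.1 hok.2.2.2 ?_).symm
        rw [hB]
        exact Stmt16Aux.closure_sw rfl hi₀
  have h2col : 2 ≤ Stmt16Aux.colsum G₁' B e.2 := by
    rcases hcase with h | h
    · exact Stmt16Aux.two_le_colsum heW h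
    · rw [hcol₁₂]
      exact Stmt16Aux.two_le_colsum heW h
  refine ⟨e.2, ?_, ?_⟩
  · exact Stmt16Aux.ncard_final (fun i => he₁ ▸ Stmt16Aux.endpoint_simple hc₁ hp₁ i e.2)
      (by omega)
  · exact Stmt16Aux.ncard_final (fun i => he₂ ▸ Stmt16Aux.endpoint_simple hc₂ hp₂ i e.2)
      (by omega)
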